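/- Every lattice path can be imitated by a C² curve of constant curvature: for every v₀ ∈ ℝ³ and every finite sequence E₁, …, Eₙ ∈ {±4π·e₁, ±4π·e₂, ±4π·e₃} (where e₁, e₂, e₃ is the standard basis of ℝ³), there exist L > 0, a C² unit-speed curve r : [0, L] → ℝ³ with ‖r''(s)‖ = 1 for all s, and parameters 0 = s₀ < s₁ < ⋯ < sₙ = L such that r(sₘ) = v₀ + E₁ + ⋯ + Eₘ for every m = 0, 1, …, n, and the vectors r'(sₘ) and r''(sₘ) do not depend on m. -/

import Mathlib

open Set Metric Real

noncomputable section

/-- Points of `ℝ³` with the Euclidean norm. -/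
abbrev E3 := EuclideanSpace ℝ (Fin 3)

/-- The `i`-th standard basis vector of `ℝ³`. -/
def stdBasis3 (i : Fin 3) : E3 := EuclideanSpace.single i 1

namespace LP

open intervalIntegral

def glue (c : ℝ) (f g : ℝ → ℝ) : ℝ → ℝ := fun s => if s ≤ c then f s else g (s - c)

lemma glue_of_le {c : ℝ} {f g : ℝ → ℝ} {s : ℝ} (h : s ≤ c) : glue c f g s = f s := if_pos h

lemma glue_of_ge {c : ℝ} {f g : ℝ → ℝ} {s : ℝ} (h0 : f c = g 0) (h : c ≤ s) :
    glue c f g s = g (s - c) := by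
  rcases eq_or_lt_of_le h with h' | h'
  · subst h'; rw [glue_of_le le_rfl, h0]; simp
  · exact if_neg (not_le.2 h')

lemma glue_hasDerivAt {c : ℝ} {f g f' g' : ℝ → ℝ}
    (hf : ∀ s, HasDerivAt f (f' s) s) (hg : ∀ s, HasDerivAt g (g' s) s)
    (h0 : f c = g 0) (h1 : f' c = g' 0) (s : ℝ) :
    HasDerivAt (glue c f g) (glue c f' g' s) s := by
  have hg2 : ∀ u, HasDerivAt (fun u => g (u - c)) (g' (u - c)) u := by
    intro u
    simpa [Function.comp_def] using (hg (u - c)).comp u ((hasDerivAt_id u).sub_const c)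
  rcases lt_trichotomy s c with h | h | h
  · have he : glue c f g =ᶠ[nhds s] f :=
      Filter.eventuallyEq_of_mem (Iio_mem_nhds h) (fun u hu => if_pos (le_of_lt hu))
    rw [glue_of_le h.le]
    exact (hf s).congr_of_eventuallyEq he
  · subst h
    have hIic : HasDerivWithinAt (glue s f g) (f' s) (Iic s) s :=
      ((hf s).hasDerivWithinAt).congr (fun u hu => glue_of_le hu) (glue_of_le le_rfl)
    have hIci : HasDerivWithinAt (glue s f g) (f' s) (Ici s) s := by
      have := ((hg2 s).hasDerivWithinAt (s := Ici s)).congr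
        (fun u hu => (glue_of_ge h0 hu)) (glue_of_ge h0 le_rfl)
      simpa [h1] using this
    rw [glue_of_le le_rfl]
    simpa [Iic_union_Ici] using hIic.union hIci
  · have he : glue c f g =ᶠ[nhds s] fun u => g (u - c) :=
      Filter.eventuallyEq_of_mem (Ioi_mem_nhds h) (fun u hu => if_neg (not_le.2 hu))
    rw [glue_of_ge h1 h.le]
    exact (hg2 s).congr_of_eventuallyEq he

lemma glue_cont {c : ℝ} {f g : ℝ → ℝ} (hf : Continuous f) (hg : Continuous g)
    (h0 : f c = g 0) : Continuous (glue c f g) := by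
  refine Continuous.if_le hf (hg.comp (continuous_id.sub continuous_const))
    continuous_id continuous_const (fun a ha => ?_)
  rw [ha, sub_self]; exact h0

lemma glue_integral {c d : ℝ} {f g : ℝ → ℝ} (hf : Continuous f) (hg : Continuous g)
    (h0 : f c = g 0) (hc : 0 ≤ c) (hd : 0 ≤ d) :
    ∫ s in (0:ℝ)..(c + d), glue c f g s
      = (∫ s in (0:ℝ)..c, f s) + ∫ s in (0:ℝ)..d, g s := by
  have hgc : Continuous (glue c f g) := glue_cont hf hg h0
  have i1 : IntervalIntegrable (glue c f g) MeasureTheory.volume 0 c :=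
    hgc.intervalIntegrable 0 c
  have i2 : IntervalIntegrable (glue c f g) MeasureTheory.volume c (c + d) :=
    hgc.intervalIntegrable c (c + d)
  have hsplit := integral_add_adjacent_intervals i1 i2
  rw [← hsplit]
  congr 1
  · refine integral_congr (fun u hu => ?_)
    rw [uIcc_of_le hc] at hu
    exact glue_of_le hu.2
  · have h1 : ∫ u in c..(c + d), glue c f g u = ∫ u in c..(c + d), g (u - c) :=
      integral_congr (fun u hu => by
        rw [uIcc_of_le (by linarith)] at hu
        exact glue_of_ge h0 hu.1)
    rw [h1, integral_comp_sub_right g c]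
    norm_num

structure UC where
  x : ℝ → ℝ
  y : ℝ → ℝ
  z : ℝ → ℝ
  x' : ℝ → ℝ
  y' : ℝ → ℝ
  z' : ℝ → ℝ
  len : ℝ
  dx : ℝ
  dy : ℝ
  dz : ℝ
  pos : 0 < len
  hx : ∀ s, HasDerivAt x (x' s) s
  hy : ∀ s, HasDerivAt y (y' s) s
  hz : ∀ s, HasDerivAt z (z' s) s
  cx : Continuous x'
  cy : Continuous y'
  cz : Continuous z'
  n1 : ∀ s, x s ^ 2 + y s ^ 2 + z s ^ 2 = 1
  n2 : ∀ s, x' s ^ 2 + y' s ^ 2 + z' s ^ 2 = 1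
  ix : ∫ s in (0:ℝ)..len, x s = dx
  iy : ∫ s in (0:ℝ)..len, y s = dy
  iz : ∫ s in (0:ℝ)..len, z s = dz

lemma UC.contx (U : UC) : Continuous U.x :=
  (Differentiable.continuous (fun s => (U.hx s).differentiableAt))
lemma UC.conty (U : UC) : Continuous U.y :=
  (Differentiable.continuous (fun s => (U.hy s).differentiableAt))
lemma UC.contz (U : UC) : Continuous U.z :=
  (Differentiable.continuous (fun s => (U.hz s).differentiableAt))

/-- start-state predicate: tangent `(a,b,0)`, normal `(-b,a,0)`. -/
def St (U : UC) (a b : ℝ) : Prop :=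
  U.x 0 = a ∧ U.y 0 = b ∧ U.z 0 = 0 ∧ U.x' 0 = -b ∧ U.y' 0 = a ∧ U.z' 0 = 0

def En (U : UC) (a b : ℝ) : Prop :=
  U.x U.len = a ∧ U.y U.len = b ∧ U.z U.len = 0 ∧
  U.x' U.len = -b ∧ U.y' U.len = a ∧ U.z' U.len = 0

def comp (A B : UC) (a b : ℝ) (hA : En A a b) (hB : St B a b) : UC where
  x := glue A.len A.x B.x
  y := glue A.len A.y B.y
  z := glue A.len A.z B.z
  x' := glue A.len A.x' B.x'
  y' := glue A.len A.y' B.y'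
  z' := glue A.len A.z' B.z'
  len := A.len + B.len
  dx := A.dx + B.dx
  dy := A.dy + B.dy
  dz := A.dz + B.dz
  pos := add_pos A.pos B.pos
  hx := glue_hasDerivAt A.hx B.hx (hA.1.trans hB.1.symm)
    (hA.2.2.2.1.trans hB.2.2.2.1.symm)
  hy := glue_hasDerivAt A.hy B.hy (hA.2.1.trans hB.2.1.symm)
    (hA.2.2.2.2.1.trans hB.2.2.2.2.1.symm)
  hz := glue_hasDerivAt A.hz B.hz (hA.2.2.1.trans hB.2.2.1.symm)
    (hA.2.2.2.2.2.trans hB.2.2.2.2.2.symm)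
  cx := glue_cont A.cx B.cx (hA.2.2.2.1.trans hB.2.2.2.1.symm)
  cy := glue_cont A.cy B.cy (hA.2.2.2.2.1.trans hB.2.2.2.2.1.symm)
  cz := glue_cont A.cz B.cz (hA.2.2.2.2.2.trans hB.2.2.2.2.2.symm)
  n1 := by
    intro s
    unfold glue
    by_cases h : s ≤ A.len
    · simp only [if_pos h]; exact A.n1 s
    · simp only [if_neg h]; exact B.n1 (s - A.len)
  n2 := by
    intro s
    unfold glue
    by_cases h : s ≤ A.len
    · simp only [if_pos h]; exact A.n2 s
    · simp only [if_neg h]; exact B.n2 (s - A.len)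
  ix := by
    rw [glue_integral A.contx B.contx (hA.1.trans hB.1.symm) A.pos.le B.pos.le,
      A.ix, B.ix]
  iy := by
    rw [glue_integral A.conty B.conty (hA.2.1.trans hB.2.1.symm) A.pos.le B.pos.le,
      A.iy, B.iy]
  iz := by
    rw [glue_integral A.contz B.contz (hA.2.2.1.trans hB.2.2.1.symm) A.pos.le B.pos.le,
      A.iz, B.iz]

variable {A B : UC} {a b a' b' : ℝ} {hA : En A a b} {hB : St B a b}

lemma St_comp (h : St A a' b') : St (comp A B a b hA hB) a' b' := by
  obtain ⟨h1, h2, h3, h4, h5, h6⟩ := h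
  refine ⟨?_, ?_, ?_, ?_, ?_, ?_⟩ <;>
    simp only [comp, glue_of_le A.pos.le, h1, h2, h3, h4, h5, h6]

lemma En_comp (h : En B a' b') : En (comp A B a b hA hB) a' b' := by
  obtain ⟨h1, h2, h3, h4, h5, h6⟩ := h
  have hle : A.len ≤ A.len + B.len := by linarith [B.pos]
  have hc : A.len + B.len - A.len = B.len := by ring
  refine ⟨?_, ?_, ?_, ?_, ?_, ?_⟩
  · show glue A.len A.x B.x (A.len + B.len) = _
    rw [glue_of_ge (hA.1.trans hB.1.symm) hle, hc, h1]
  · show glue A.len A.y B.y (A.len + B.len) = _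
    rw [glue_of_ge (hA.2.1.trans hB.2.1.symm) hle, hc, h2]
  · show glue A.len A.z B.z (A.len + B.len) = _
    rw [glue_of_ge (hA.2.2.1.trans hB.2.2.1.symm) hle, hc, h3]
  · show glue A.len A.x' B.x' (A.len + B.len) = _
    rw [glue_of_ge (hA.2.2.2.1.trans hB.2.2.2.1.symm) hle, hc, h4]
  · show glue A.len A.y' B.y' (A.len + B.len) = _
    rw [glue_of_ge (hA.2.2.2.2.1.trans hB.2.2.2.2.1.symm) hle, hc, h5]
  · show glue A.len A.z' B.z' (A.len + B.len) = _
    rw [glue_of_ge (hA.2.2.2.2.2.trans hB.2.2.2.2.2.symm) hle, hc, h6]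

lemma comp_x_of_le {t : ℝ} (h : t ≤ A.len) : (comp A B a b hA hB).x t = A.x t := glue_of_le h
lemma comp_y_of_le {t : ℝ} (h : t ≤ A.len) : (comp A B a b hA hB).y t = A.y t := glue_of_le h
lemma comp_z_of_le {t : ℝ} (h : t ≤ A.len) : (comp A B a b hA hB).z t = A.z t := glue_of_le h
lemma comp_x'_of_le {t : ℝ} (h : t ≤ A.len) : (comp A B a b hA hB).x' t = A.x' t := glue_of_le h
lemma comp_y'_of_le {t : ℝ} (h : t ≤ A.len) : (comp A B a b hA hB).y' t = A.y' t := glue_of_le h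
lemma comp_z'_of_le {t : ℝ} (h : t ≤ A.len) : (comp A B a b hA hB).z' t = A.z' t := glue_of_le h


lemma combo_norm {A₁ A₂ A₃ P₁ P₂ P₃ Q₁ Q₂ Q₃ u v w : ℝ}
    (hA : A₁^2 + A₂^2 + A₃^2 = 1) (hP : P₁^2 + P₂^2 + P₃^2 = 1)
    (hQ : Q₁^2 + Q₂^2 + Q₃^2 = 1) (hAP : A₁*P₁ + A₂*P₂ + A₃*P₃ = 0)
    (hAQ : A₁*Q₁ + A₂*Q₂ + A₃*Q₃ = 0) (hPQ : P₁*Q₁ + P₂*Q₂ + P₃*Q₃ = 0)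
    (hc : u^2 + v^2 + w^2 = 1) :
    (u*A₁ + v*P₁ + w*Q₁)^2 + (u*A₂ + v*P₂ + w*Q₂)^2 + (u*A₃ + v*P₃ + w*Q₃)^2 = 1 := by
  linear_combination u^2*hA + v^2*hP + w^2*hQ + 2*u*v*hAP + 2*u*w*hAQ + 2*v*w*hPQ + hc

lemma circ_hasDerivAt (σ C₀ C₁ C₂ : ℝ) (hσ : σ ≠ 0) (s : ℝ) :
    HasDerivAt (fun s => C₀ + C₁ * cos (s/σ) + C₂ * sin (s/σ))
      (-(C₁/σ) * sin (s/σ) + (C₂/σ) * cos (s/σ)) s := by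
  have h1 : HasDerivAt (fun s : ℝ => s / σ) (1/σ) s := by
    simpa using (hasDerivAt_id s).div_const σ
  have hc : HasDerivAt (fun s : ℝ => cos (s/σ)) (-sin (s/σ) * (1/σ)) s :=
    (Real.hasDerivAt_cos _).comp s h1
  have hs' : HasDerivAt (fun s : ℝ => sin (s/σ)) (cos (s/σ) * (1/σ)) s :=
    (Real.hasDerivAt_sin _).comp s h1
  have := ((hc.const_mul C₁).const_add C₀).add (hs'.const_mul C₂)
  exact this.congr_deriv (by ring)

lemma integral_cos_div {σ : ℝ} (hσ : σ ≠ 0) :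
    ∫ s in (0:ℝ)..(2*π*σ), cos (s/σ) = 0 := by
  rw [integral_comp_div (f := fun x => cos x) hσ]
  have h1 : (2*π*σ)/σ = 2*π := by field_simp
  have h0 : (0:ℝ)/σ = 0 := by simp
  rw [h1, h0, integral_cos]
  simp

lemma integral_sin_div {σ : ℝ} (hσ : σ ≠ 0) :
    ∫ s in (0:ℝ)..(2*π*σ), sin (s/σ) = 0 := by
  rw [integral_comp_div (f := fun x => sin x) hσ]
  have h1 : (2*π*σ)/σ = 2*π := by field_simp
  have h0 : (0:ℝ)/σ = 0 := by simp
  rw [h1, h0, integral_sin]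
  simp

lemma circ_integral (σ C₀ C₁ C₂ : ℝ) (hσ : σ ≠ 0) :
    ∫ s in (0:ℝ)..(2*π*σ), (C₀ + C₁ * cos (s/σ) + C₂ * sin (s/σ)) = C₀ * (2*π*σ) := by
  have c1 : Continuous (fun s : ℝ => C₀ + C₁ * cos (s/σ)) := by continuity
  have c2 : Continuous (fun s : ℝ => C₁ * cos (s/σ)) := by continuity
  have c3 : Continuous (fun s : ℝ => C₂ * sin (s/σ)) := by continuity
  rw [integral_add (c1.intervalIntegrable _ _) (c3.intervalIntegrable _ _),
    integral_add ((continuous_const (y := C₀)).intervalIntegrable _ _)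
      (c2.intervalIntegrable _ _)]
  rw [integral_const_mul, integral_const_mul, integral_cos_div hσ, integral_sin_div hσ]
  simp [mul_comm]

def gcArc (θ ℓ : ℝ) (hℓ : 0 < ℓ) : UC where
  x := fun s => cos (θ + s)
  y := fun s => sin (θ + s)
  z := fun _ => 0
  x' := fun s => -sin (θ + s)
  y' := fun s => cos (θ + s)
  z' := fun _ => 0
  len := ℓ
  dx := sin (θ + ℓ) - sin θ
  dy := cos θ - cos (θ + ℓ)
  dz := 0
  pos := hℓ
  hx := fun s => by
    simpa [Function.comp_def] using (Real.hasDerivAt_cos (θ + s)).comp s ((hasDerivAt_id s).const_add θ)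
  hy := fun s => by
    simpa [Function.comp_def] using (Real.hasDerivAt_sin (θ + s)).comp s ((hasDerivAt_id s).const_add θ)
  hz := fun s => hasDerivAt_const s 0
  cx := by continuity
  cy := by continuity
  cz := continuous_const
  n1 := fun s => by simpa using Real.cos_sq_add_sin_sq (θ + s)
  n2 := fun s => by simpa using Real.sin_sq_add_cos_sq (θ + s)
  ix := by
    rw [intervalIntegral.integral_comp_add_left (fun x => cos x) θ]
    simp [integral_cos]
  iy := by
    rw [intervalIntegral.integral_comp_add_left (fun x => sin x) θ]
    simp [integral_sin]
  iz := by simp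

lemma St_gcArc {θ ℓ : ℝ} (hℓ : 0 < ℓ) : St (gcArc θ ℓ hℓ) (cos θ) (sin θ) := by
  refine ⟨?_, ?_, ?_, ?_, ?_, ?_⟩ <;> simp [gcArc]

lemma En_gcArc {θ ℓ : ℝ} (hℓ : 0 < ℓ) : En (gcArc θ ℓ hℓ) (cos (θ + ℓ)) (sin (θ + ℓ)) := by
  refine ⟨?_, ?_, ?_, ?_, ?_, ?_⟩ <;> simp [gcArc, En]


def loop (a b ρ ε : ℝ) (hab : a^2 + b^2 = 1) (hρ : 0 < sin ρ) (hε : ε^2 = 1) : UC where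
  x := fun s => cos ρ^2*a + (sin ρ*(sin ρ*a)) * cos (s/sin ρ) + (sin ρ*(-b)) * sin (s/sin ρ)
  y := fun s => cos ρ^2*b + (sin ρ*(sin ρ*b)) * cos (s/sin ρ) + (sin ρ*a) * sin (s/sin ρ)
  z := fun s => ε*(sin ρ*cos ρ) + (sin ρ*(-(ε*cos ρ))) * cos (s/sin ρ) + (sin ρ*0) * sin (s/sin ρ)
  x' := fun s => -(sin ρ*a) * sin (s/sin ρ) + (-b) * cos (s/sin ρ)
  y' := fun s => -(sin ρ*b) * sin (s/sin ρ) + a * cos (s/sin ρ)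
  z' := fun s => (ε*cos ρ) * sin (s/sin ρ) + 0 * cos (s/sin ρ)
  len := 2*π*sin ρ
  dx := cos ρ^2*a * (2*π*sin ρ)
  dy := cos ρ^2*b * (2*π*sin ρ)
  dz := ε*(sin ρ*cos ρ) * (2*π*sin ρ)
  pos := by positivity
  hx := fun s => by
    have := circ_hasDerivAt (sin ρ) (cos ρ^2*a) (sin ρ*(sin ρ*a)) (sin ρ*(-b)) hρ.ne' s
    convert this using 1 <;> (try field_simp) <;> (try ring)
  hy := fun s => by
    have := circ_hasDerivAt (sin ρ) (cos ρ^2*b) (sin ρ*(sin ρ*b)) (sin ρ*a) hρ.ne' s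
    convert this using 1 <;> (try field_simp) <;> (try ring)
  hz := fun s => by
    have := circ_hasDerivAt (sin ρ) (ε*(sin ρ*cos ρ)) (sin ρ*(-(ε*cos ρ))) (sin ρ*0) hρ.ne' s
    convert this using 1 <;> (try field_simp) <;> (try ring)
  cx := by continuity
  cy := by continuity
  cz := by continuity
  n1 := fun s => by
    have hA : (cos ρ*a)^2 + (cos ρ*b)^2 + (ε*sin ρ)^2 = 1 := by
      linear_combination (cos ρ)^2*hab + (sin ρ)^2*hε + Real.sin_sq_add_cos_sq ρ
    have hP : (sin ρ*a)^2 + (sin ρ*b)^2 + (-(ε*cos ρ))^2 = 1 := by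
      linear_combination (sin ρ)^2*hab + (cos ρ)^2*hε + Real.sin_sq_add_cos_sq ρ
    have hQ : (-b)^2 + a^2 + (0:ℝ)^2 = 1 := by linear_combination hab
    have hAP : (cos ρ*a)*(sin ρ*a) + (cos ρ*b)*(sin ρ*b) + (ε*sin ρ)*(-(ε*cos ρ)) = 0 := by
      linear_combination cos ρ*sin ρ*hab - sin ρ*cos ρ*hε
    have hAQ : (cos ρ*a)*(-b) + (cos ρ*b)*a + (ε*sin ρ)*0 = 0 := by ring
    have hPQ : (sin ρ*a)*(-b) + (sin ρ*b)*a + (-(ε*cos ρ))*0 = 0 := by ring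
    have hc : (cos ρ)^2 + (sin ρ*cos (s/sin ρ))^2 + (sin ρ*sin (s/sin ρ))^2 = 1 := by
      linear_combination (sin ρ)^2 * Real.sin_sq_add_cos_sq (s/sin ρ) + Real.sin_sq_add_cos_sq ρ
    linear_combination combo_norm hA hP hQ hAP hAQ hPQ hc
  n2 := fun s => by
    have hA : (cos ρ*a)^2 + (cos ρ*b)^2 + (ε*sin ρ)^2 = 1 := by
      linear_combination (cos ρ)^2*hab + (sin ρ)^2*hε + Real.sin_sq_add_cos_sq ρ
    have hP : (sin ρ*a)^2 + (sin ρ*b)^2 + (-(ε*cos ρ))^2 = 1 := by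
      linear_combination (sin ρ)^2*hab + (cos ρ)^2*hε + Real.sin_sq_add_cos_sq ρ
    have hQ : (-b)^2 + a^2 + (0:ℝ)^2 = 1 := by linear_combination hab
    have hAP : (cos ρ*a)*(sin ρ*a) + (cos ρ*b)*(sin ρ*b) + (ε*sin ρ)*(-(ε*cos ρ)) = 0 := by
      linear_combination cos ρ*sin ρ*hab - sin ρ*cos ρ*hε
    have hAQ : (cos ρ*a)*(-b) + (cos ρ*b)*a + (ε*sin ρ)*0 = 0 := by ring
    have hPQ : (sin ρ*a)*(-b) + (sin ρ*b)*a + (-(ε*cos ρ))*0 = 0 := by ring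
    have hc : (0:ℝ)^2 + (-sin (s/sin ρ))^2 + (cos (s/sin ρ))^2 = 1 := by
      linear_combination Real.sin_sq_add_cos_sq (s/sin ρ)
    linear_combination combo_norm hA hP hQ hAP hAQ hPQ hc
  ix := circ_integral (sin ρ) _ _ _ hρ.ne'
  iy := circ_integral (sin ρ) _ _ _ hρ.ne'
  iz := circ_integral (sin ρ) _ _ _ hρ.ne'

lemma St_loop {a b ρ ε : ℝ} (hab : a^2 + b^2 = 1) (hρ : 0 < sin ρ) (hε : ε^2 = 1) :
    St (loop a b ρ ε hab hρ hε) a b := by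
  have h0 : (0:ℝ)/sin ρ = 0 := by simp
  refine ⟨?_, ?_, ?_, ?_, ?_, ?_⟩ <;>
      simp only [loop, h0, Real.cos_zero, Real.sin_zero]
  · linear_combination a * Real.sin_sq_add_cos_sq ρ
  · linear_combination b * Real.sin_sq_add_cos_sq ρ
  · ring
  · ring
  · ring
  · ring

lemma En_loop {a b ρ ε : ℝ} (hab : a^2 + b^2 = 1) (hρ : 0 < sin ρ) (hε : ε^2 = 1) :
    En (loop a b ρ ε hab hρ hε) a b := by
  have h0 : (2*π*sin ρ)/sin ρ = 2*π := by field_simp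
  refine ⟨?_, ?_, ?_, ?_, ?_, ?_⟩ <;>
      simp only [loop, h0, Real.cos_two_pi, Real.sin_two_pi]
  · linear_combination a * Real.sin_sq_add_cos_sq ρ
  · linear_combination b * Real.sin_sq_add_cos_sq ρ
  · ring
  · ring
  · ring
  · ring


lemma loop_exists {a b ρ ε : ℝ} (hab : a^2 + b^2 = 1) (hρ : 0 < sin ρ) (hε : ε^2 = 1) :
    ∃ U : UC, St U a b ∧ En U a b ∧ (U.dx, U.dy, U.dz)
      = (cos ρ^2*a*(2*π*sin ρ), cos ρ^2*b*(2*π*sin ρ), ε*(sin ρ*cos ρ)*(2*π*sin ρ)) :=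
  ⟨loop a b ρ ε hab hρ hε, St_loop hab hρ hε, En_loop hab hρ hε, rfl⟩

lemma gcArc_exists (θ ℓ : ℝ) (hℓ : 0 < ℓ) :
    ∃ U : UC, St U (cos θ) (sin θ) ∧ En U (cos (θ+ℓ)) (sin (θ+ℓ)) ∧
      (U.dx, U.dy, U.dz) = (sin (θ+ℓ) - sin θ, cos θ - cos (θ+ℓ), 0) :=
  ⟨gcArc θ ℓ hℓ, St_gcArc hℓ, En_gcArc hℓ, rfl⟩

lemma comp_exists {a b a₀ b₀ a₁ b₁ : ℝ} {dA dB : ℝ × ℝ × ℝ}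
    (h1 : ∃ U : UC, St U a₀ b₀ ∧ En U a b ∧ (U.dx, U.dy, U.dz) = dA)
    (h2 : ∃ V : UC, St V a b ∧ En V a₁ b₁ ∧ (V.dx, V.dy, V.dz) = dB) :
    ∃ W : UC, St W a₀ b₀ ∧ En W a₁ b₁ ∧ (W.dx, W.dy, W.dz) = dA + dB := by
  obtain ⟨U, sU, eU, dU⟩ := h1
  obtain ⟨V, sV, eV, dV⟩ := h2
  exact ⟨comp U V a b eU sV, St_comp sU, En_comp eV, by
    rw [← dU, ← dV]; rfl⟩

lemma loops6_exists {α : ℝ} (hα1 : 0 < sin α) (hα : sin α * cos α^2 = 1/3)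
    (a b : ℝ) (hab : a^2 + b^2 = 1) :
    ∃ U : UC, St U a b ∧ En U a b ∧ (U.dx, U.dy, U.dz) = (4*π*a, 4*π*b, 0) := by
  have h1 := loop_exists hab hα1 (one_pow 2)
  have h2 := loop_exists hab hα1 (show ((-1:ℝ))^2 = 1 by norm_num)
  have h := comp_exists (comp_exists (comp_exists (comp_exists (comp_exists h1 h2) h1) h2) h1) h2
  obtain ⟨U, sU, eU, dU⟩ := h
  refine ⟨U, sU, eU, ?_⟩
  rw [dU]
  simp only [Prod.mk_add_mk, Prod.mk.injEq]
  refine ⟨by linear_combination 12*π*a*hα, by linear_combination 12*π*b*hα, by ring⟩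

lemma loops3_exists {β : ℝ} (hβ1 : 0 < sin β) (hβ : sin β^2 * cos β = 1/3)
    {ε : ℝ} (hε : ε^2 = 1) (a b : ℝ) (hab : a^2 + b^2 = 1) :
    ∃ U : UC, St U a b ∧ En U a b ∧
      (U.dx, U.dy, U.dz) = (6*π*a*(sin β*cos β^2), 6*π*b*(sin β*cos β^2), 2*π*ε) := by
  have h1 := loop_exists hab hβ1 hε
  have h := comp_exists (comp_exists h1 h1) h1
  obtain ⟨U, sU, eU, dU⟩ := h
  refine ⟨U, sU, eU, ?_⟩
  rw [dU]
  simp only [Prod.mk_add_mk, Prod.mk.injEq]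
  refine ⟨by ring, by ring, by linear_combination 6*π*ε*hβ⟩


lemma ex_cast {a b a' b' c d c' d' : ℝ} {T : ℝ × ℝ × ℝ}
    (h : ∃ U : UC, St U a b ∧ En U c d ∧ (U.dx, U.dy, U.dz) = T)
    (h1 : a = a') (h2 : b = b') (h3 : c = c') (h4 : d = d') :
    ∃ U : UC, St U a' b' ∧ En U c' d' ∧ (U.dx, U.dy, U.dz) = T := by
  subst h1; subst h2; subst h3; subst h4; exact h

lemma exists_param1 : ∃ α : ℝ, 0 < sin α ∧ sin α * cos α^2 = 1/3 := by
  have hc : ContinuousOn (fun t : ℝ => sin t * cos t^2) (Icc 0 (π/4)) :=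
    (by continuity : Continuous (fun t : ℝ => sin t * cos t^2)).continuousOn
  have hmem : (1:ℝ)/3 ∈ Ioo ((fun t : ℝ => sin t * cos t^2) 0)
      ((fun t : ℝ => sin t * cos t^2) (π/4)) := by
    constructor
    · simp
    · simp only [Real.sin_pi_div_four, Real.cos_pi_div_four]
      nlinarith [Real.sq_sqrt (show (0:ℝ) ≤ 2 by norm_num), Real.sqrt_nonneg 2]
  obtain ⟨x, hx, hfx⟩ := intermediate_value_Ioo (by positivity : (0:ℝ) ≤ π/4) hc hmem
  exact ⟨x, Real.sin_pos_of_pos_of_lt_pi hx.1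
    (lt_trans hx.2 (by linarith [Real.pi_pos])), hfx⟩

lemma exists_param2 : ∃ β : ℝ, 0 < sin β ∧ sin β^2 * cos β = 1/3 := by
  have hc : ContinuousOn (fun t : ℝ => sin t^2 * cos t) (Icc 0 (π/4)) :=
    (by continuity : Continuous (fun t : ℝ => sin t^2 * cos t)).continuousOn
  have hmem : (1:ℝ)/3 ∈ Ioo ((fun t : ℝ => sin t^2 * cos t) 0)
      ((fun t : ℝ => sin t^2 * cos t) (π/4)) := by
    constructor
    · simp
    · simp only [Real.sin_pi_div_four, Real.cos_pi_div_four]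
      nlinarith [Real.sq_sqrt (show (0:ℝ) ≤ 2 by norm_num), Real.sqrt_nonneg 2]
  obtain ⟨x, hx, hfx⟩ := intermediate_value_Ioo (by positivity : (0:ℝ) ≤ π/4) hc hmem
  exact ⟨x, Real.sin_pos_of_pos_of_lt_pi hx.1
    (lt_trans hx.2 (by linarith [Real.pi_pos])), hfx⟩

lemma exists_block {α β : ℝ} (hα1 : 0 < sin α) (hα : sin α * cos α^2 = 1/3)
    (hβ1 : 0 < sin β) (hβ : sin β^2 * cos β = 1/3) (d : E3)
    (hd : ∃ i : Fin 3, d = (4 * π) • stdBasis3 i ∨ d = -((4 * π) • stdBasis3 i)) :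
    ∃ U : UC, St U 1 0 ∧ En U 1 0 ∧
      U.dx • stdBasis3 0 + U.dy • stdBasis3 1 + U.dz • stdBasis3 2 = d := by
  have h10 : (1:ℝ)^2 + 0^2 = 1 := by norm_num
  have hm10 : (-1:ℝ)^2 + 0^2 = 1 := by norm_num
  have h01 : (0:ℝ)^2 + 1^2 = 1 := by norm_num
  have h0m1 : (0:ℝ)^2 + (-1)^2 = 1 := by norm_num
  have hpi : (0:ℝ) < π := Real.pi_pos
  have hc32 : cos (3*π/2) = 0 := by
    rw [show (3:ℝ)*π/2 = π + π/2 by ring, Real.cos_add]; simp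
  have hs32 : sin (3*π/2) = -1 := by
    rw [show (3:ℝ)*π/2 = π + π/2 by ring, Real.sin_add]; simp
  have hcpp : cos (π + π) = 1 := by rw [show π+π = 2*π by ring]; exact Real.cos_two_pi
  have hspp : sin (π + π) = 0 := by rw [show π+π = 2*π by ring]; exact Real.sin_two_pi
  have hone : ((1:ℝ))^2 = 1 := one_pow 2
  have hmone : ((-1:ℝ))^2 = 1 := by norm_num
  obtain ⟨i, hi⟩ := hd
  fin_cases i <;> rcases hi with hi | hi <;> subst hi
  · -- +e0
    obtain ⟨U, sU, eU, dU⟩ := loops6_exists hα1 hα 1 0 h10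
    refine ⟨U, sU, eU, ?_⟩
    simp only [Prod.mk.injEq] at dU
    obtain ⟨hx, hy, hz⟩ := dU
    rw [hx, hy, hz]
    simp
  · -- -e0
    have g1 := ex_cast (gcArc_exists 0 π hpi) Real.cos_zero Real.sin_zero
      (show cos (0+π) = -1 by simp) (show sin (0+π) = 0 by simp)
    have l6 := loops6_exists hα1 hα (-1) 0 hm10
    have g2 := ex_cast (gcArc_exists π π hpi) Real.cos_pi Real.sin_pi hcpp hspp
    obtain ⟨U, sU, eU, dU⟩ := comp_exists (comp_exists g1 l6) g2
    refine ⟨U, sU, eU, ?_⟩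
    simp only [Prod.mk_add_mk, Prod.mk.injEq] at dU
    obtain ⟨hx, hy, hz⟩ := dU
    have hx' : U.dx = -(4*π) := by rw [hx]; simp [hspp]; try ring
    have hy' : U.dy = 0 := by rw [hy]; simp [hcpp, Real.cos_pi]
    have hz' : U.dz = 0 := by rw [hz]; simp
    rw [hx', hy', hz']
    simp
  · -- +e1
    have g1 := ex_cast (gcArc_exists 0 (π/2) (by positivity)) Real.cos_zero Real.sin_zero
      (show cos (0+π/2) = 0 by simp) (show sin (0+π/2) = 1 by simp)
    have l6 := loops6_exists hα1 hα 0 1 h01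
    have g2 := ex_cast (gcArc_exists (π/2) (3*π/2) (by positivity))
      Real.cos_pi_div_two Real.sin_pi_div_two
      (show cos (π/2+3*π/2) = 1 by rw [show π/2+3*π/2 = 2*π by ring]; exact Real.cos_two_pi)
      (show sin (π/2+3*π/2) = 0 by rw [show π/2+3*π/2 = 2*π by ring]; exact Real.sin_two_pi)
    obtain ⟨U, sU, eU, dU⟩ := comp_exists (comp_exists g1 l6) g2
    refine ⟨U, sU, eU, ?_⟩
    simp only [Prod.mk_add_mk, Prod.mk.injEq] at dU
    obtain ⟨hx, hy, hz⟩ := dU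
    have hx' : U.dx = 0 := by
      rw [hx, show π/2+3*π/2 = 2*π by ring]; simp
    have hy' : U.dy = 4*π := by
      rw [hy, show π/2+3*π/2 = 2*π by ring]; simp; try ring
    have hz' : U.dz = 0 := by rw [hz]; simp
    rw [hx', hy', hz']
    simp
  · -- -e1
    have g1 := ex_cast (gcArc_exists 0 (3*π/2) (by positivity)) Real.cos_zero Real.sin_zero
      (show cos (0+3*π/2) = 0 by rw [zero_add]; exact hc32)
      (show sin (0+3*π/2) = -1 by rw [zero_add]; exact hs32)
    have l6 := loops6_exists hα1 hα 0 (-1) h0m1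
    have g2 := ex_cast (gcArc_exists (3*π/2) (π/2) (by positivity)) hc32 hs32
      (show cos (3*π/2+π/2) = 1 by rw [show 3*π/2+π/2 = 2*π by ring]; exact Real.cos_two_pi)
      (show sin (3*π/2+π/2) = 0 by rw [show 3*π/2+π/2 = 2*π by ring]; exact Real.sin_two_pi)
    obtain ⟨U, sU, eU, dU⟩ := comp_exists (comp_exists g1 l6) g2
    refine ⟨U, sU, eU, ?_⟩
    simp only [Prod.mk_add_mk, Prod.mk.injEq] at dU
    obtain ⟨hx, hy, hz⟩ := dU
    have hx' : U.dx = 0 := by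
      rw [hx, zero_add, show 3*π/2+π/2 = 2*π by ring, hs32]; simp
    have hy' : U.dy = -(4*π) := by
      rw [hy, zero_add, show 3*π/2+π/2 = 2*π by ring, hc32]; simp; try ring
    have hz' : U.dz = 0 := by rw [hz]; simp
    rw [hx', hy', hz']
    simp
  · -- +e2
    have l3a := loops3_exists hβ1 hβ hone 1 0 h10
    have g1 := ex_cast (gcArc_exists 0 π hpi) Real.cos_zero Real.sin_zero
      (show cos (0+π) = -1 by simp) (show sin (0+π) = 0 by simp)
    have l3b := loops3_exists hβ1 hβ hone (-1) 0 hm10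
    have g2 := ex_cast (gcArc_exists π π hpi) Real.cos_pi Real.sin_pi hcpp hspp
    obtain ⟨U, sU, eU, dU⟩ := comp_exists (comp_exists (comp_exists l3a g1) l3b) g2
    refine ⟨U, sU, eU, ?_⟩
    simp only [Prod.mk_add_mk, Prod.mk.injEq] at dU
    obtain ⟨hx, hy, hz⟩ := dU
    have hx' : U.dx = 0 := by rw [hx, hspp]; simp; try ring
    have hy' : U.dy = 0 := by rw [hy, hcpp]; simp [Real.cos_pi]
    have hz' : U.dz = 4*π := by rw [hz]; ring
    rw [hx', hy', hz']
    simp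
  · -- -e2
    have l3a := loops3_exists hβ1 hβ hmone 1 0 h10
    have g1 := ex_cast (gcArc_exists 0 π hpi) Real.cos_zero Real.sin_zero
      (show cos (0+π) = -1 by simp) (show sin (0+π) = 0 by simp)
    have l3b := loops3_exists hβ1 hβ hmone (-1) 0 hm10
    have g2 := ex_cast (gcArc_exists π π hpi) Real.cos_pi Real.sin_pi hcpp hspp
    obtain ⟨U, sU, eU, dU⟩ := comp_exists (comp_exists (comp_exists l3a g1) l3b) g2
    refine ⟨U, sU, eU, ?_⟩
    simp only [Prod.mk_add_mk, Prod.mk.injEq] at dU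
    obtain ⟨hx, hy, hz⟩ := dU
    have hx' : U.dx = 0 := by rw [hx, hspp]; simp; try ring
    have hy' : U.dy = 0 := by rw [hy, hcpp]; simp [Real.cos_pi]
    have hz' : U.dz = -(4*π) := by rw [hz]; ring
    rw [hx', hy', hz']
    simp


lemma comp_len {A B : UC} {a b : ℝ} {hA : En A a b} {hB : St B a b} :
    (comp A B a b hA hB).len = A.len + B.len := rfl
lemma comp_dx {A B : UC} {a b : ℝ} {hA : En A a b} {hB : St B a b} :
    (comp A B a b hA hB).dx = A.dx + B.dx := rfl
lemma comp_dy {A B : UC} {a b : ℝ} {hA : En A a b} {hB : St B a b} :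
    (comp A B a b hA hB).dy = A.dy + B.dy := rfl
lemma comp_dz {A B : UC} {a b : ℝ} {hA : En A a b} {hB : St B a b} :
    (comp A B a b hA hB).dz = A.dz + B.dz := rfl

lemma norm_combo {x y z : ℝ} (h : x^2 + y^2 + z^2 = 1) :
    ‖x • stdBasis3 0 + y • stdBasis3 1 + z • stdBasis3 2‖ = 1 := by
  have hv : ∀ i : Fin 3, (x • stdBasis3 0 + y • stdBasis3 1 + z • stdBasis3 2) i
      = ![x, y, z] i := by
    intro i
    fin_cases i <;>
      simp [stdBasis3, EuclideanSpace.single_apply, Fin.ext_iff]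
  rw [EuclideanSpace.norm_eq]
  rw [show (∑ i : Fin 3, ‖(x • stdBasis3 0 + y • stdBasis3 1 + z • stdBasis3 2) i‖^2)
      = x^2 + y^2 + z^2 by
    rw [Fin.sum_univ_three, hv 0, hv 1, hv 2]
    simp [sq_abs]]
  rw [h, Real.sqrt_one]

lemma UC.integral_vec (U : UC) {c : ℝ} (hc : c = U.len) :
    ∫ u in (0:ℝ)..c, (U.x u • stdBasis3 0 + U.y u • stdBasis3 1 + U.z u • stdBasis3 2)
      = U.dx • stdBasis3 0 + U.dy • stdBasis3 1 + U.dz • stdBasis3 2 := by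
  subst hc
  have i1 : IntervalIntegrable (fun u => U.x u • stdBasis3 0) MeasureTheory.volume 0 U.len :=
    (U.contx.smul continuous_const).intervalIntegrable _ _
  have i2 : IntervalIntegrable (fun u => U.y u • stdBasis3 1) MeasureTheory.volume 0 U.len :=
    (U.conty.smul continuous_const).intervalIntegrable _ _
  have i3 : IntervalIntegrable (fun u => U.z u • stdBasis3 2) MeasureTheory.volume 0 U.len :=
    (U.contz.smul continuous_const).intervalIntegrable _ _
  rw [integral_add (i1.add i2) i3, integral_add i1 i2,
    intervalIntegral.integral_smul_const, intervalIntegral.integral_smul_const,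
    intervalIntegral.integral_smul_const, U.ix, U.iy, U.iz]

end LP

open LP in
/-- every lattice path can be imitated by a C² curve of constant
curvature: for every `v₀ ∈ ℝ³` and every finite sequence `E₁, …, Eₙ` of steps of the
form `±4π·eᵢ`, there is a C² unit-speed curve `r : [0, L] → ℝ³` with `‖r''‖ = 1` and
parameters `0 = s₀ < s₁ < ⋯ < sₙ = L` such that `r(sₘ) = v₀ + E₁ + ⋯ + Eₘ` for every
`m`, and the vectors `r'(sₘ)` and `r''(sₘ)` do not depend on `m`. -/
theorem lattice_path_imitation (v₀ : E3) (n : ℕ) (hn : 1 ≤ n) (E : ℕ → E3)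
    (hE : ∀ m < n, ∃ i : Fin 3,
      E m = (4 * π) • stdBasis3 i ∨ E m = -((4 * π) • stdBasis3 i)) :
    ∃ (L : ℝ) (r : ℝ → E3) (s : ℕ → ℝ),
      0 < L ∧
      ContDiffOn ℝ 2 r (Icc 0 L) ∧
      (∀ t ∈ Icc 0 L, ‖derivWithin r (Icc 0 L) t‖ = 1) ∧
      (∀ t ∈ Icc 0 L,
        ‖derivWithin (fun u => derivWithin r (Icc 0 L) u) (Icc 0 L) t‖ = 1) ∧
      s 0 = 0 ∧ s n = L ∧
      (∀ m < n, s m < s (m + 1)) ∧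
      (∀ m ≤ n, r (s m) = v₀ + ∑ k ∈ Finset.range m, E k) ∧
      (∀ m ≤ n, ∀ m' ≤ n,
        derivWithin r (Icc 0 L) (s m) = derivWithin r (Icc 0 L) (s m')) ∧
      (∀ m ≤ n, ∀ m' ≤ n,
        derivWithin (fun u => derivWithin r (Icc 0 L) u) (Icc 0 L) (s m)
          = derivWithin (fun u => derivWithin r (Icc 0 L) u) (Icc 0 L) (s m')) := by
  obtain ⟨α, hα1, hα⟩ := exists_param1
  obtain ⟨β, hβ1, hβ⟩ := exists_param2
  have hBex : ∀ m : ℕ, ∃ U : UC, St U 1 0 ∧ En U 1 0 ∧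
      (m < n → U.dx • stdBasis3 0 + U.dy • stdBasis3 1 + U.dz • stdBasis3 2 = E m) := by
    intro m
    by_cases h : m < n
    · obtain ⟨U, h1, h2, h3⟩ := exists_block hα1 hα hβ1 hβ (E m) (hE m h)
      exact ⟨U, h1, h2, fun _ => h3⟩
    · obtain ⟨U, h1, h2, _⟩ := exists_block hα1 hα hβ1 hβ ((4*π) • stdBasis3 0)
        ⟨0, Or.inl rfl⟩
      exact ⟨U, h1, h2, fun hc => absurd hc h⟩
  choose B hSt hEn hvec using hBex
  obtain ⟨C, hC0, hCs⟩ : ∃ C : ℕ → {U : UC // St U 1 0 ∧ En U 1 0},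
      C 0 = ⟨B 0, hSt 0, hEn 0⟩ ∧ ∀ k, C (k+1)
        = ⟨comp (C k).1 (B (k+1)) 1 0 (C k).2.2 (hSt (k+1)),
           St_comp (C k).2.1, En_comp (hEn (k+1))⟩ := by
    refine ⟨fun m => Nat.rec (motive := fun _ => {U : UC // St U 1 0 ∧ En U 1 0})
      ⟨B 0, hSt 0, hEn 0⟩
      (fun k ih => ⟨comp ih.1 (B (k+1)) 1 0 ih.2.2 (hSt (k+1)),
        St_comp ih.2.1, En_comp (hEn (k+1))⟩) m, rfl, fun k => rfl⟩
  set s : ℕ → ℝ := fun m => ∑ k ∈ Finset.range m, (B k).len with hs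
  have hlenC : ∀ m, (C m).1.len = s (m+1) := by
    intro m
    induction m with
    | zero => rw [hC0]; simp [hs]
    | succ k ih =>
      rw [hCs k]
      show (C k).1.len + (B (k+1)).len = _
      rw [ih, hs]
      simp [Finset.sum_range_succ]
  have hmono : ∀ k m, k ≤ m → (C k).1.len ≤ (C m).1.len := by
    intro k m hkm
    induction m, hkm using Nat.le_induction with
    | base => exact le_rfl
    | succ m hm ih =>
      rw [hCs m]
      show _ ≤ (C m).1.len + (B (m+1)).len
      have := (B (m+1)).pos
      linarith
  have hagree : ∀ k m, k ≤ m → ∀ t, t ≤ (C k).1.len →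
      ((C m).1.x t = (C k).1.x t ∧ (C m).1.y t = (C k).1.y t ∧
       (C m).1.z t = (C k).1.z t ∧ (C m).1.x' t = (C k).1.x' t ∧
       (C m).1.y' t = (C k).1.y' t ∧ (C m).1.z' t = (C k).1.z' t) := by
    intro k m hkm
    induction m, hkm using Nat.le_induction with
    | base => exact fun t ht => ⟨rfl, rfl, rfl, rfl, rfl, rfl⟩
    | succ m hm ih =>
      intro t ht
      have htm : t ≤ (C m).1.len := le_trans ht (hmono k m hm)
      have h1 := ih t ht
      rw [hCs m]
      exact ⟨(comp_x_of_le (hA := (C m).2.2) (hB := hSt (m+1)) htm).trans h1.1,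
        (comp_y_of_le (hA := (C m).2.2) (hB := hSt (m+1)) htm).trans h1.2.1,
        (comp_z_of_le (hA := (C m).2.2) (hB := hSt (m+1)) htm).trans h1.2.2.1,
        (comp_x'_of_le (hA := (C m).2.2) (hB := hSt (m+1)) htm).trans h1.2.2.2.1,
        (comp_y'_of_le (hA := (C m).2.2) (hB := hSt (m+1)) htm).trans h1.2.2.2.2.1,
        (comp_z'_of_le (hA := (C m).2.2) (hB := hSt (m+1)) htm).trans h1.2.2.2.2.2⟩
  have hL0 : ∀ m, 0 ≤ s m := fun m => Finset.sum_nonneg (fun k _ => (B k).pos.le)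
  have hsmono : ∀ m m', m ≤ m' → s m ≤ s m' := fun m m' h =>
    Finset.sum_le_sum_of_subset_of_nonneg (Finset.range_subset_range.2 h)
      (fun k _ _ => (B k).pos.le)
  have hn1 : n - 1 + 1 = n := Nat.succ_pred_eq_of_pos hn
  set W := (C (n-1)).1 with hW
  have hWlen : W.len = s n := by rw [hW, hlenC, hn1]
  set L := s n with hL
  have hLpos : 0 < L := by
    rw [hL, hs]
    exact Finset.sum_pos (fun i _ => (B i).pos) (Finset.nonempty_range_iff.2 (by omega))
  set Tg : ℝ → E3 := fun t =>
    W.x t • stdBasis3 0 + W.y t • stdBasis3 1 + W.z t • stdBasis3 2 with hTgdef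
  set Tg' : ℝ → E3 := fun t =>
    W.x' t • stdBasis3 0 + W.y' t • stdBasis3 1 + W.z' t • stdBasis3 2 with hTg'def
  have hTg : ∀ t, HasDerivAt Tg (Tg' t) t := fun t =>
    (((W.hx t).smul_const _).add ((W.hy t).smul_const _)).add ((W.hz t).smul_const _)
  have hTg'c : Continuous Tg' :=
    ((W.cx.smul continuous_const).add (W.cy.smul continuous_const)).add
      (W.cz.smul continuous_const)
  have hTgc : Continuous Tg :=
    ((W.contx.smul continuous_const).add (W.conty.smul continuous_const)).add
      (W.contz.smul continuous_const)
  set r : ℝ → E3 := fun t => v₀ + ∫ u in (0:ℝ)..t, Tg u with hrdef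
  have hr : ∀ t, HasDerivAt r (Tg t) t := by
    intro t
    have := (intervalIntegral.integral_hasStrictDerivAt_right
      (hTgc.intervalIntegrable 0 t) (hTgc.stronglyMeasurableAtFilter _ _)
      hTgc.continuousAt).hasDerivAt
    exact this.const_add v₀
  have hCD : ContDiff ℝ 2 r := by
    have hdr : deriv r = Tg := funext fun t => (hr t).deriv
    have hdTg : deriv Tg = Tg' := funext fun t => (hTg t).deriv
    have h12 : ContDiff ℝ (1 + 1) r := by
      rw [contDiff_succ_iff_deriv]
      refine ⟨fun t => (hr t).differentiableAt, by simp, ?_⟩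
      rw [hdr, contDiff_one_iff_deriv, hdTg]
      exact ⟨fun t => (hTg t).differentiableAt, hTg'c⟩
    norm_num at h12
    exact h12
  have hUD : UniqueDiffOn ℝ (Icc (0:ℝ) L) := uniqueDiffOn_Icc hLpos
  have hd1 : ∀ t ∈ Icc (0:ℝ) L, derivWithin r (Icc 0 L) t = Tg t := fun t ht =>
    (hr t).hasDerivWithinAt.derivWithin (hUD t ht)
  have hd2 : ∀ t ∈ Icc (0:ℝ) L,
      derivWithin (fun u => derivWithin r (Icc 0 L) u) (Icc 0 L) t = Tg' t := by
    intro t ht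
    rw [derivWithin_congr (fun u hu => hd1 u hu) (hd1 t ht)]
    exact (hTg t).hasDerivWithinAt.derivWithin (hUD t ht)
  have hmark : ∀ m, m ≤ n → W.x (s m) = 1 ∧ W.y (s m) = 0 ∧ W.z (s m) = 0 ∧
      W.x' (s m) = 0 ∧ W.y' (s m) = 1 ∧ W.z' (s m) = 0 := by
    intro m hm
    obtain _ | k := m
    · have h0 : s 0 = 0 := by simp [hs]
      obtain ⟨a1, a2, a3, a4, a5, a6⟩ := (C (n-1)).2.1
      rw [h0]
      exact ⟨a1, a2, a3, by rw [a4]; norm_num, a5, a6⟩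
    · have hk : k ≤ n - 1 := by omega
      have hsk : s (k+1) = (C k).1.len := (hlenC k).symm
      have hag := hagree k (n-1) hk ((C k).1.len) le_rfl
      obtain ⟨e1, e2, e3, e4, e5, e6⟩ := (C k).2.2
      rw [hsk]
      exact ⟨hag.1.trans e1, hag.2.1.trans e2, hag.2.2.1.trans e3,
        (hag.2.2.2.1.trans e4).trans (by norm_num),
        hag.2.2.2.2.1.trans e5, hag.2.2.2.2.2.trans e6⟩
  have hdisp : ∀ m, m < n →
      (C m).1.dx • stdBasis3 0 + (C m).1.dy • stdBasis3 1 + (C m).1.dz • stdBasis3 2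
        = ∑ k ∈ Finset.range (m+1), E k := by
    intro m
    induction m with
    | zero =>
      intro h
      rw [hC0]
      simp only [Finset.sum_range_succ, Finset.sum_range_zero, zero_add]
      exact hvec 0 h
    | succ k ih =>
      intro h
      rw [hCs k]
      show ((C k).1.dx + (B (k+1)).dx) • _ + ((C k).1.dy + (B (k+1)).dy) • _ +
        ((C k).1.dz + (B (k+1)).dz) • _ = _
      rw [Finset.sum_range_succ, ← ih (by omega), ← hvec (k+1) h]
      module
  have hint : ∀ m, m ≤ n → (∫ u in (0:ℝ)..s m, Tg u) = ∑ k ∈ Finset.range m, E k := by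
    intro m hm
    obtain _ | k := m
    · simp [hs]
    · have hk : k ≤ n - 1 := by omega
      have hsk : s (k+1) = (C k).1.len := (hlenC k).symm
      have hcongr : ∀ u ∈ uIcc (0:ℝ) (s (k+1)), Tg u
          = (C k).1.x u • stdBasis3 0 + (C k).1.y u • stdBasis3 1
            + (C k).1.z u • stdBasis3 2 := by
        intro u hu
        rw [uIcc_of_le (hL0 (k+1))] at hu
        have hthis := hagree k (n-1) hk u (by rw [← hsk]; exact hu.2)
        rw [hTgdef]
        simp only []
        rw [hthis.1, hthis.2.1, hthis.2.2.1]
      rw [intervalIntegral.integral_congr hcongr, UC.integral_vec (C k).1 hsk,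
        hdisp k (by omega)]
  refine ⟨L, r, s, hLpos, hCD.contDiffOn, ?_, ?_, ?_, rfl, ?_, ?_, ?_, ?_⟩
  · intro t ht; rw [hd1 t ht]; exact norm_combo (W.n1 t)
  · intro t ht; rw [hd2 t ht]; exact norm_combo (W.n2 t)
  · simp [hs]
  · intro m _
    rw [hs]
    simp only [Finset.sum_range_succ]
    have := (B m).pos
    linarith
  · intro m hm
    show v₀ + (∫ u in (0:ℝ)..s m, Tg u) = _
    rw [hint m hm]
  · intro m hm m' hm'
    rw [hd1 _ ⟨hL0 m, hsmono m n hm⟩, hd1 _ ⟨hL0 m', hsmono m' n hm'⟩]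
    obtain ⟨a1, a2, a3, _, _, _⟩ := hmark m hm
    obtain ⟨b1, b2, b3, _, _, _⟩ := hmark m' hm'
    rw [hTgdef]
    simp only []
    rw [a1, a2, a3, b1, b2, b3]
  · intro m hm m' hm'
    rw [hd2 _ ⟨hL0 m, hsmono m n hm⟩, hd2 _ ⟨hL0 m', hsmono m' n hm'⟩]
    obtain ⟨_, _, _, a4, a5, a6⟩ := hmark m hm
    obtain ⟨_, _, _, b4, b5, b6⟩ := hmark m' hm'
    rw [hTg'def]
    simp only []
    rw [a4, a5, a6, b4, b5, b6]
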